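/- Let F be a continuous concave distribution function on [0,∞) with F(0)=0 that is strictly concave on [t₀−2δ, t₀+2δ] for some t₀, δ > 0 with t₀ − 2δ > 0. If G : [0,∞) → ℝ is bounded with sup |G − F| < ε where ε > 0 satisfies 2F(t₀ ± (3/2)δ) > F(t₀ ± δ) + F(t₀ ± 2δ) + 4ε (both sign choices), then the least concave majorant of G over [0,∞) agrees with the least concave majorant of G restricted to [t₀−2δ, t₀+2δ] on the interval [t₀−δ, t₀+δ]. -/

import Mathlib

/-- The least concave majorant of `f` on the set `S`, evaluated at `x`. -/
noncomputable def lcmaj (S : Set ℝ) (f : ℝ → ℝ) (x : ℝ) : ℝ :=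
  sInf {y : ℝ | ∃ g : ℝ → ℝ, ConcaveOn ℝ S g ∧ (∀ z ∈ S, f z ≤ g z) ∧ g x = y}

/-- Three point concavity inequality. -/
lemma concave_three {s : Set ℝ} {f : ℝ → ℝ} (hf : ConcaveOn ℝ s f)
    {u v w : ℝ} (hu : u ∈ s) (hw : w ∈ s) (huv : u < v) (hvw : v < w) :
    (w - v) * f u + (v - u) * f w ≤ (w - u) * f v := by
  have hwu : (0:ℝ) < w - u := by linarith
  have hp : (0:ℝ) ≤ (w - v)/(w - u) := div_nonneg (by linarith) (by linarith)
  have hq : (0:ℝ) ≤ (v - u)/(w - u) := div_nonneg (by linarith) (by linarith)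
  have hpq : (w - v)/(w - u) + (v - u)/(w - u) = 1 := by field_simp; ring
  have h := hf.2 hu hw hp hq hpq
  have hv : ((w - v)/(w - u)) • u + ((v - u)/(w - u)) • w = v := by
    simp only [smul_eq_mul]
    field_simp
    ring
  rw [hv] at h
  simp only [smul_eq_mul] at h
  rw [div_mul_eq_mul_div, div_mul_eq_mul_div, ← add_div, div_le_iff₀ hwu] at h
  linarith

/-- Existence of a supporting line at an interior point for a concave function. -/
lemma exists_support {f : ℝ → ℝ} {a b x : ℝ} (hf : ConcaveOn ℝ (Set.Icc a b) f)
    (hax : a < x) (hxb : x < b) :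
    ∃ m : ℝ, ∀ z ∈ Set.Icc a b, f z ≤ f x + m * (z - x) := by
  set T : Set ℝ := {s | ∃ z ∈ Set.Ioc x b, s = (f z - f x) / (z - x)} with hT
  have hne : T.Nonempty := ⟨(f b - f x)/(b - x), b, ⟨hxb, le_refl b⟩, rfl⟩
  have hbd : BddAbove T := by
    refine ⟨(f x - f a)/(x - a), ?_⟩
    rintro s ⟨z, ⟨hz1, hz2⟩, rfl⟩
    have h3 := concave_three hf (u := a) (v := x) (w := z)
      ⟨le_refl a, by linarith⟩ ⟨by linarith, hz2⟩ hax hz1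
    rw [div_le_div_iff₀ (by linarith) (by linarith)]
    nlinarith [h3]
  refine ⟨sSup T, ?_⟩
  intro z hz
  rcases lt_trichotomy z x with h | h | h
  · have hub : sSup T ≤ (f x - f z)/(x - z) := by
      refine csSup_le hne ?_
      rintro s ⟨w, ⟨hw1, hw2⟩, rfl⟩
      have h3 := concave_three hf (u := z) (v := x) (w := w) hz ⟨by linarith [hz.1], hw2⟩ h hw1
      rw [div_le_div_iff₀ (by linarith) (by linarith)]
      nlinarith [h3]
    have h2 : sSup T * (x - z) ≤ f x - f z := (le_div_iff₀ (by linarith)).mp hub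
    have hr : sSup T * (z - x) = -(sSup T * (x - z)) := by ring
    linarith
  · rw [h]
    simp
  · have hmem : (f z - f x)/(z - x) ∈ T := ⟨z, ⟨h, hz.2⟩, rfl⟩
    have h1 := le_csSup hbd hmem
    have h2 : f z - f x ≤ sSup T * (z - x) := by
      rw [div_le_iff₀ (by linarith)] at h1
      linarith [h1]
    linarith

/-- Key algebraic estimate combining two chord inequalities with the gap condition. -/
lemma claim_alg {δ ε d e Fx Fq Fz P B' : ℝ} (hδ : 0 < δ) (hε : 0 < ε)
    (hd : δ/2 ≤ d) (he : δ/2 ≤ e)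
    (h1 : δ/2*Fx + (d - δ/2)*Fq ≤ d*P)
    (h2 : (e - δ/2)*Fq + δ/2*Fz ≤ e*B')
    (hgap : P + B' + 4*ε < 2*Fq) :
    (Fz - Fq + 2*ε)*d ≤ (Fq - Fx - 2*ε)*e := by
  have hd0 : (0:ℝ) < d := by linarith
  have he0 : (0:ℝ) < e := by linarith
  nlinarith [mul_nonneg he0.le (sub_nonneg.mpr h1), mul_nonneg hd0.le (sub_nonneg.mpr h2),
    mul_pos (mul_pos hd0 he0) (by linarith : (0:ℝ) < 2*Fq - P - B' - 4*ε),
    mul_nonneg (mul_nonneg (by linarith : (0:ℝ) ≤ 2*d - δ) he0.le) hε.le,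
    mul_nonneg (mul_nonneg (by linarith : (0:ℝ) ≤ 2*e - δ) hd0.le) hε.le, hδ]

set_option maxHeartbeats 1000000 in
theorem stmt_9 (F G : ℝ → ℝ) (t₀ δ ε : ℝ) (hδ : 0 < δ) (hε : 0 < ε)
    (ht₀ : 0 < t₀ - 2 * δ)
    -- F is a continuous concave distribution function on [0,∞) with F(0) = 0,
    -- strictly concave on [t₀ - 2δ, t₀ + 2δ]
    (hFcont : ContinuousOn F (Set.Ici 0)) (hFmono : MonotoneOn F (Set.Ici 0))
    (hFconc : ConcaveOn ℝ (Set.Ici 0) F) (hF0 : F 0 = 0)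
    (hFstrict : StrictConcaveOn ℝ (Set.Icc (t₀ - 2 * δ) (t₀ + 2 * δ)) F)
    -- G is bounded and uniformly close to F
    (M : ℝ) (hGbd : ∀ x ∈ Set.Ici (0 : ℝ), |G x| ≤ M)
    (hGF : ∀ x ∈ Set.Ici (0 : ℝ), |G x - F x| < ε)
    -- quantitative strict-concavity gap beating 4ε
    (hgap_pos : 2 * F (t₀ + 3 / 2 * δ) > F (t₀ + δ) + F (t₀ + 2 * δ) + 4 * ε)
    (hgap_neg : 2 * F (t₀ - 3 / 2 * δ) > F (t₀ - δ) + F (t₀ - 2 * δ) + 4 * ε) :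
    ∀ x ∈ Set.Icc (t₀ - δ) (t₀ + δ),
      lcmaj (Set.Ici 0) G x = lcmaj (Set.Icc (t₀ - 2 * δ) (t₀ + 2 * δ)) G x := by
  intro x hx
  have hx1 : t₀ - δ ≤ x := hx.1
  have hx2 : x ≤ t₀ + δ := hx.2
  set K : Set ℝ := Set.Icc (t₀ - 2 * δ) (t₀ + 2 * δ) with hKdef
  set S : Set ℝ := Set.Ici (0:ℝ) with hSdef
  have hKS : K ⊆ S := fun z hz => le_trans ht₀.le hz.1
  have hxK : x ∈ K := ⟨by linarith, by linarith⟩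
  have hx0 : (0:ℝ) < x := by linarith
  have hxS : x ∈ S := hx0.le
  -- G ≤ F + ε on S, and F - ε < G on S
  have hGle : ∀ z ∈ S, G z ≤ F z + ε := fun z hz => by
    have := abs_lt.mp (hGF z hz); linarith [this.2]
  have hGge : ∀ z ∈ S, F z - ε < G z := fun z hz => by
    have := abs_lt.mp (hGF z hz); linarith [this.1]
  -- F + ε is concave
  have hFε : ConcaveOn ℝ S (fun z => F z + ε) := hFconc.add_const ε
  have hFεK : ConcaveOn ℝ K (fun z => F z + ε) := hFε.subset hKS (convex_Icc _ _)
  -- majorant sets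
  let T : Set ℝ → ℝ → Set ℝ := fun S' z =>
    {y : ℝ | ∃ g : ℝ → ℝ, ConcaveOn ℝ S' g ∧ (∀ w ∈ S', G w ≤ g w) ∧ g z = y}
  have hdef : ∀ (S' : Set ℝ) (z : ℝ), lcmaj S' G z = sInf (T S' z) := fun _ _ => rfl
  have hTSne : ∀ z : ℝ, (T S z).Nonempty := fun z =>
    ⟨F z + ε, (fun w => F w + ε), hFε, fun w hw => hGle w hw, rfl⟩
  have hTKne : ∀ z : ℝ, (T K z).Nonempty := fun z =>
    ⟨F z + ε, (fun w => F w + ε), hFεK, fun w hw => hGle w (hKS hw), rfl⟩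
  have hTKbdd : ∀ z ∈ K, BddBelow (T K z) := fun z hz =>
    ⟨G z, by rintro y ⟨g, hg, hmaj, rfl⟩; exact hmaj z hz⟩
  have hTSbdd : ∀ z ∈ S, BddBelow (T S z) := fun z hz =>
    ⟨G z, by rintro y ⟨g, hg, hmaj, rfl⟩; exact hmaj z hz⟩
  -- the local least concave majorant ℓ
  set ℓ : ℝ → ℝ := fun z => lcmaj K G z with hℓdef
  have hℓG : ∀ z ∈ K, G z ≤ ℓ z := fun z hz => by
    show G z ≤ lcmaj K G z
    rw [hdef]
    exact le_csInf (hTKne z) (by rintro y ⟨g, hg, hmaj, rfl⟩; exact hmaj z hz)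
  have hℓle : ∀ z ∈ K, ∀ y ∈ T K z, ℓ z ≤ y := fun z hz y hy => by
    show lcmaj K G z ≤ y
    rw [hdef]
    exact csInf_le (hTKbdd z hz) hy
  have hℓF : ∀ z ∈ K, ℓ z ≤ F z + ε := fun z hz =>
    hℓle z hz _ ⟨(fun w => F w + ε), hFεK, fun w hw => hGle w (hKS hw), rfl⟩
  have hℓconc : ConcaveOn ℝ K ℓ := by
    refine ⟨convex_Icc _ _, fun u hu v hv p q hp hq hpq => ?_⟩
    show p • ℓ u + q • ℓ v ≤ lcmaj K G (p • u + q • v)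
    rw [hdef]
    refine le_csInf (hTKne _) ?_
    rintro y ⟨g, hg, hmaj, rfl⟩
    have h1 : ℓ u ≤ g u := hℓle u hu _ ⟨g, hg, hmaj, rfl⟩
    have h2 : ℓ v ≤ g v := hℓle v hv _ ⟨g, hg, hmaj, rfl⟩
    have h3 := hg.2 hu hv hp hq hpq
    have h4 : p • ℓ u ≤ p • g u := smul_le_smul_of_nonneg_left h1 hp
    have h5 : q • ℓ v ≤ q • g v := smul_le_smul_of_nonneg_left h2 hq
    calc p • ℓ u + q • ℓ v ≤ p • g u + q • g v := add_le_add h4 h5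
      _ ≤ g (p • u + q • v) := h3
  -- easy direction: lcmaj K G x ≤ lcmaj S G x
  have heasy : lcmaj K G x ≤ lcmaj S G x := by
    rw [hdef, hdef]
    refine csInf_le_csInf (hTKbdd x hxK) (hTSne x) ?_
    rintro y ⟨g, hg, hmaj, rfl⟩
    exact ⟨g, hg.subset hKS (convex_Icc _ _), fun w hw => hmaj w (hKS hw), rfl⟩
  -- supporting line of ℓ at x
  obtain ⟨m, hm⟩ := exists_support hℓconc (show t₀ - 2*δ < x by linarith)
    (show x < t₀ + 2*δ by linarith)
  -- the affine function
  set A : ℝ → ℝ := fun z => ℓ x + m * (z - x) with hAdef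
  have hAconc : ConcaveOn ℝ S A := by
    refine ⟨convex_Ici _, fun u hu v hv p q hp hq hpq => ?_⟩
    have heq : p • A u + q • A v = A (p • u + q • v) := by
      simp only [hAdef, smul_eq_mul]
      linear_combination (ℓ x - m*x) * hpq
    exact le_of_eq heq
  -- the glued majorant min (F + ε) A
  have hgconc : ConcaveOn ℝ S (fun z => min (F z + ε) (A z)) := by
    have h := hFε.inf hAconc
    have hfun : ((fun z => F z + ε) ⊓ A) = (fun z => min (F z + ε) (A z)) := by
      funext z
      simp [Pi.inf_apply]
    rwa [hfun] at h
  -- it majorizes G on S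
  have hgmaj : ∀ z ∈ S, G z ≤ min (F z + ε) (A z) := by
    intro z hz
    refine le_min (hGle z hz) ?_
    rcases lt_or_ge z (t₀ - 2*δ) with hza | hza
    · -- left tail
      have hq'K : t₀ - 3/2*δ ∈ K := ⟨by linarith, by linarith⟩
      have hq'S : (t₀ - 3/2*δ) ∈ S := hKS hq'K
      have hsup : ℓ (t₀ - 3/2*δ) ≤ ℓ x + m * ((t₀ - 3/2*δ) - x) := hm _ hq'K
      have hstep1 : F (t₀ - 3/2*δ) - ε ≤ ℓ x + m * ((t₀ - 3/2*δ) - x) :=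
        le_trans (le_trans (hGge _ hq'S).le (hℓG _ hq'K)) hsup
      have hvii : m * (x - (t₀ - 3/2*δ)) ≤ F x - F (t₀ - 3/2*δ) + 2*ε := by
        have hFx := hℓF x hxK
        have hr : m*(x - (t₀ - 3/2*δ)) = -(m*((t₀ - 3/2*δ) - x)) := by ring
        linarith
      have h2' : δ/2*(F z) + (((t₀ - 3/2*δ) - z) - δ/2)*(F (t₀ - 3/2*δ))
          ≤ ((t₀ - 3/2*δ) - z)*(F (t₀ - 2*δ)) := by
        have h3 := concave_three hFconc (u := z) (v := t₀ - 2*δ) (w := t₀ - 3/2*δ)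
          hz hq'S hza (by linarith)
        linarith [h3]
      have h1' : (((x - (t₀ - 3/2*δ))) - δ/2)*(F (t₀ - 3/2*δ)) + δ/2*(F x)
          ≤ (x - (t₀ - 3/2*δ))*(F (t₀ - δ)) := by
        rcases eq_or_lt_of_le hx1 with hxe | hxl
        · rw [← hxe]
          apply le_of_eq
          ring
        · have h3 := concave_three hFconc (u := t₀ - 3/2*δ) (v := t₀ - δ) (w := x)
            hq'S hxS (by linarith) hxl
          linarith [h3]
      have hclaim := claim_alg (δ := δ) (ε := ε) (d := (t₀ - 3/2*δ) - z)
        (e := x - (t₀ - 3/2*δ)) (Fx := F z) (Fq := F (t₀ - 3/2*δ)) (Fz := F x)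
        (P := F (t₀ - 2*δ)) (B' := F (t₀ - δ)) hδ hε (by linarith) (by linarith)
        h2' h1' (by linarith)
      have he'0 : (0:ℝ) < (t₀ - 3/2*δ) - z := by linarith
      have hd'0 : (0:ℝ) < x - (t₀ - 3/2*δ) := by linarith
      have t1 : m*(x - (t₀ - 3/2*δ)) * ((t₀ - 3/2*δ) - z)
          ≤ (F x - F (t₀ - 3/2*δ) + 2*ε) * ((t₀ - 3/2*δ) - z) :=
        mul_le_mul_of_nonneg_right hvii he'0.le
      have t3 : (m*((t₀ - 3/2*δ) - z)) * (x - (t₀ - 3/2*δ))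
          ≤ (F (t₀ - 3/2*δ) - F z - 2*ε) * (x - (t₀ - 3/2*δ)) := by
        linarith [t1, hclaim]
      have t4 : m*((t₀ - 3/2*δ) - z) ≤ F (t₀ - 3/2*δ) - F z - 2*ε :=
        (mul_le_mul_iff_of_pos_right hd'0).mp t3
      have hfin : F z + ε ≤ A z := by
        show F z + ε ≤ ℓ x + m * (z - x)
        have hr1 : m*(z - x) = m*((t₀ - 3/2*δ) - x) - m*((t₀ - 3/2*δ) - z) := by ring
        linarith
      linarith [hGle z hz]
    · rcases le_or_gt z (t₀ + 2*δ) with hzb | hzb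
      · -- middle
        have hzK : z ∈ K := ⟨hza, hzb⟩
        exact le_trans (hℓG z hzK) (hm z hzK)
      · -- right tail
        have hqK : t₀ + 3/2*δ ∈ K := ⟨by linarith, by linarith⟩
        have hqS : (t₀ + 3/2*δ) ∈ S := hKS hqK
        have hsup : ℓ (t₀ + 3/2*δ) ≤ ℓ x + m * ((t₀ + 3/2*δ) - x) := hm _ hqK
        have hstep1 : F (t₀ + 3/2*δ) - ε ≤ ℓ x + m * ((t₀ + 3/2*δ) - x) :=
          le_trans (le_trans (hGge _ hqS).le (hℓG _ hqK)) hsup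
        have h_i : F (t₀ + 3/2*δ) - F x - 2*ε ≤ m * ((t₀ + 3/2*δ) - x) := by
          have hFx := hℓF x hxK
          linarith
        have h1 : δ/2*(F x) + (((t₀ + 3/2*δ) - x) - δ/2)*(F (t₀ + 3/2*δ))
            ≤ ((t₀ + 3/2*δ) - x)*(F (t₀ + δ)) := by
          rcases eq_or_lt_of_le hx2 with hxe | hxl
          · rw [hxe]
            apply le_of_eq
            ring
          · have h3 := concave_three hFconc (u := x) (v := t₀ + δ) (w := t₀ + 3/2*δ)
              hxS hqS hxl (by linarith)
            linarith [h3]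
        have h2 : ((z - (t₀ + 3/2*δ)) - δ/2)*(F (t₀ + 3/2*δ)) + δ/2*(F z)
            ≤ (z - (t₀ + 3/2*δ))*(F (t₀ + 2*δ)) := by
          have h3 := concave_three hFconc (u := t₀ + 3/2*δ) (v := t₀ + 2*δ) (w := z)
            hqS hz (by linarith) hzb
          linarith [h3]
        have hclaim := claim_alg (δ := δ) (ε := ε) (d := (t₀ + 3/2*δ) - x)
          (e := z - (t₀ + 3/2*δ)) (Fx := F x) (Fq := F (t₀ + 3/2*δ)) (Fz := F z)
          (P := F (t₀ + δ)) (B' := F (t₀ + 2*δ)) hδ hε (by linarith) (by linarith)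
          h1 h2 (by linarith)
        have hd0 : (0:ℝ) < (t₀ + 3/2*δ) - x := by linarith
        have he0 : (0:ℝ) < z - (t₀ + 3/2*δ) := by linarith
        have t1 : (F (t₀ + 3/2*δ) - F x - 2*ε) * (z - (t₀ + 3/2*δ))
            ≤ (m * ((t₀ + 3/2*δ) - x)) * (z - (t₀ + 3/2*δ)) :=
          mul_le_mul_of_nonneg_right h_i he0.le
        have t3 : (F z - F (t₀ + 3/2*δ) + 2*ε) * ((t₀ + 3/2*δ) - x)
            ≤ (m * (z - (t₀ + 3/2*δ))) * ((t₀ + 3/2*δ) - x) := by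
          linarith [t1, hclaim]
        have t4 : F z - F (t₀ + 3/2*δ) + 2*ε ≤ m * (z - (t₀ + 3/2*δ)) :=
          (mul_le_mul_iff_of_pos_right hd0).mp t3
        have hfin : F z + ε ≤ A z := by
          show F z + ε ≤ ℓ x + m * (z - x)
          have hr1 : m*(z - x) = m*((t₀ + 3/2*δ) - x) + m*(z - (t₀ + 3/2*δ)) := by ring
          linarith
        linarith [hGle z hz]
  -- hard direction
  have hhard : lcmaj S G x ≤ ℓ x := by
    have hmem : (min (F x + ε) (A x)) ∈ T S x :=
      ⟨(fun z => min (F z + ε) (A z)), hgconc, hgmaj, rfl⟩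
    have h1 : lcmaj S G x ≤ min (F x + ε) (A x) := by
      rw [hdef]
      exact csInf_le (hTSbdd x hxS) hmem
    have h2 : A x = ℓ x := by
      show ℓ x + m * (x - x) = ℓ x
      ring
    calc lcmaj S G x ≤ min (F x + ε) (A x) := h1
      _ ≤ A x := min_le_right _ _
      _ = ℓ x := h2
  exact le_antisymm hhard heasy
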